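/- (Boundedness of dual variables, Lemma 3) Consider the dual update y_i(t+1) = [(1−η_t) Σ_j a_{ij}(t) y_j(t) + η_t g_i^t(x_i(t))]_+ with doubly stochastic weights a_{ij}(t), step sizes η_t ∈ (0,1], initial conditions y_i(0) = 0, and ‖g_i^t(x)‖ ≤ κ₂ for all i, t, x. Then Σ_{i=1}^n ‖y_i(t)‖² ≤ n κ₂² for all t, and in particular ‖y_i(t)‖ ≤ √n κ₂ for each i and t. -/

import Mathlib

noncomputable def vecPos {h : ℕ} (a : EuclideanSpace ℝ (Fin h)) : EuclideanSpace ℝ (Fin h) :=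
  WithLp.toLp 2 (fun i => max (a i) 0)

lemma norm_vecPos_le {h : ℕ} (a : EuclideanSpace ℝ (Fin h)) : ‖vecPos a‖ ≤ ‖a‖ := by
  rw [EuclideanSpace.norm_eq, EuclideanSpace.norm_eq]
  apply Real.sqrt_le_sqrt
  apply Finset.sum_le_sum
  intro i _
  have h1 : ‖vecPos a i‖ ≤ ‖a i‖ := by
    simp only [vecPos, PiLp.toLp_apply, Real.norm_eq_abs]
    rcases le_or_gt (a i) 0 with h' | h'
    · simp [max_eq_right h', abs_nonneg]
    · simp [max_eq_left h'.le]
  exact pow_le_pow_left₀ (norm_nonneg _) h1 2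

lemma jensen_norm_sq {h : ℕ} {m : ℕ} (w : Fin m → ℝ) (v : Fin m → EuclideanSpace ℝ (Fin h))
    (hw : ∀ j, 0 ≤ w j) (hw1 : ∑ j, w j = 1) :
    ‖∑ j, w j • v j‖ ^ 2 ≤ ∑ j, w j * ‖v j‖ ^ 2 := by
  have h1 : ‖∑ j, w j • v j‖ ≤ ∑ j, w j * ‖v j‖ := by
    calc ‖∑ j, w j • v j‖ ≤ ∑ j, ‖w j • v j‖ := norm_sum_le _ _
      _ = ∑ j, w j * ‖v j‖ := by
          apply Finset.sum_congr rfl; intro j _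
          rw [norm_smul, Real.norm_eq_abs, abs_of_nonneg (hw j)]
  have h2 : (∑ j, w j * ‖v j‖) ^ 2 ≤ ∑ j, w j * ‖v j‖ ^ 2 := by
    have hcs := Finset.sum_mul_sq_le_sq_mul_sq Finset.univ
      (fun j => Real.sqrt (w j)) (fun j => Real.sqrt (w j) * ‖v j‖)
    have e1 : ∀ j, Real.sqrt (w j) * (Real.sqrt (w j) * ‖v j‖) = w j * ‖v j‖ := by
      intro j; rw [← mul_assoc, Real.mul_self_sqrt (hw j)]
    have e2 : ∀ j, Real.sqrt (w j) ^ 2 = w j := fun j => Real.sq_sqrt (hw j)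
    have e3 : ∀ j, (Real.sqrt (w j) * ‖v j‖) ^ 2 = w j * ‖v j‖ ^ 2 := by
      intro j; rw [mul_pow, e2]
    simp only [e1, e2, e3] at hcs
    simpa [hw1] using hcs
  calc ‖∑ j, w j • v j‖ ^ 2 ≤ (∑ j, w j * ‖v j‖) ^ 2 := by
        apply pow_le_pow_left₀ (norm_nonneg _) h1
    _ ≤ _ := h2

theorem dual_variables_bounded {n h : ℕ}
    (A : ℕ → Matrix (Fin n) (Fin n) ℝ)
    (hA0 : ∀ t i j, 0 ≤ A t i j)
    (hArow : ∀ t i, ∑ j, A t i j = 1) (hAcol : ∀ t j, ∑ i, A t i j = 1)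
    (η : ℕ → ℝ) (hη : ∀ t, 0 < η t ∧ η t ≤ 1)
    (g : ℕ → Fin n → EuclideanSpace ℝ (Fin h))
    (κ₂ : ℝ) (hκ₂ : 0 < κ₂)
    (hg : ∀ t i, ‖g t i‖ ≤ κ₂)
    (y : ℕ → Fin n → EuclideanSpace ℝ (Fin h))
    (hy0 : ∀ i, y 0 i = 0)
    (hrec : ∀ t i, y (t + 1) i = vecPos ((1 - η t) • (∑ j, A t i j • y t j) + η t • g t i)) :
    ∀ t, (∑ i, ‖y t i‖ ^ 2 ≤ n * κ₂ ^ 2) ∧ ∀ i, ‖y t i‖ ≤ Real.sqrt n * κ₂ := by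
  have key : ∀ t, ∑ i, ‖y t i‖ ^ 2 ≤ n * κ₂ ^ 2 := by
    intro t
    induction t with
    | zero =>
        simp [hy0]
        positivity
    | succ t ih =>
        obtain ⟨hη0, hη1⟩ := hη t
        set z : Fin n → EuclideanSpace ℝ (Fin h) := fun i => ∑ j, A t i j • y t j with hz
        have hzb : ∀ i, ‖z i‖ ^ 2 ≤ ∑ j, A t i j * ‖y t j‖ ^ 2 := fun i =>
          jensen_norm_sq (fun j => A t i j) (y t) (hA0 t i) (hArow t i)
        have hstep : ∀ i, ‖y (t + 1) i‖ ^ 2 ≤ (1 - η t) * ‖z i‖ ^ 2 + η t * κ₂ ^ 2 := by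
          intro i
          have h1 : ‖y (t + 1) i‖ ≤ (1 - η t) * ‖z i‖ + η t * κ₂ := by
            rw [hrec t i]
            calc ‖vecPos ((1 - η t) • z i + η t • g t i)‖
                ≤ ‖(1 - η t) • z i + η t • g t i‖ := norm_vecPos_le _
              _ ≤ ‖(1 - η t) • z i‖ + ‖η t • g t i‖ := norm_add_le _ _
              _ ≤ (1 - η t) * ‖z i‖ + η t * κ₂ := by
                  rw [norm_smul, norm_smul, Real.norm_eq_abs, Real.norm_eq_abs,
                    abs_of_nonneg (by linarith), abs_of_nonneg hη0.le]
                  have := hg t i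
                  nlinarith [norm_nonneg (z i)]
          have h2 : ‖y (t + 1) i‖ ^ 2 ≤ ((1 - η t) * ‖z i‖ + η t * κ₂) ^ 2 :=
            pow_le_pow_left₀ (norm_nonneg _) h1 2
          nlinarith [h2, mul_nonneg (mul_nonneg hη0.le (show (0:ℝ) ≤ 1 - η t by linarith))
            (sq_nonneg (‖z i‖ - κ₂))]
        have hzsum : ∑ i, ‖z i‖ ^ 2 ≤ n * κ₂ ^ 2 := by
          calc ∑ i, ‖z i‖ ^ 2 ≤ ∑ i, ∑ j, A t i j * ‖y t j‖ ^ 2 :=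
                Finset.sum_le_sum fun i _ => hzb i
            _ = ∑ j, (∑ i, A t i j) * ‖y t j‖ ^ 2 := by
                rw [Finset.sum_comm]
                exact Finset.sum_congr rfl fun j _ => (Finset.sum_mul ..).symm
            _ = ∑ j, ‖y t j‖ ^ 2 := by simp [hAcol t]
            _ ≤ n * κ₂ ^ 2 := ih
        calc ∑ i, ‖y (t + 1) i‖ ^ 2
            ≤ ∑ i, ((1 - η t) * ‖z i‖ ^ 2 + η t * κ₂ ^ 2) :=
              Finset.sum_le_sum fun i _ => hstep i
          _ = (1 - η t) * ∑ i, ‖z i‖ ^ 2 + n * (η t * κ₂ ^ 2) := by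
              rw [Finset.sum_add_distrib, ← Finset.mul_sum, Finset.sum_const, Finset.card_univ]
              simp [nsmul_eq_mul]
          _ ≤ (1 - η t) * (n * κ₂ ^ 2) + n * (η t * κ₂ ^ 2) := by
              have h1η : (0:ℝ) ≤ 1 - η t := by linarith
              nlinarith
          _ = n * κ₂ ^ 2 := by ring
  intro t
  refine ⟨key t, fun i => ?_⟩
  have h1 : ‖y t i‖ ^ 2 ≤ n * κ₂ ^ 2 := by
    have := key t
    have h2 : ‖y t i‖ ^ 2 ≤ ∑ j, ‖y t j‖ ^ 2 :=
      Finset.single_le_sum (fun j _ => sq_nonneg ‖y t j‖) (Finset.mem_univ i)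
    linarith
  have h3 : Real.sqrt n * κ₂ = Real.sqrt (n * κ₂ ^ 2) := by
    rw [Real.sqrt_mul (Nat.cast_nonneg n), Real.sqrt_sq hκ₂.le]
  rw [h3]
  calc ‖y t i‖ = Real.sqrt (‖y t i‖ ^ 2) := (Real.sqrt_sq (norm_nonneg _)).symm
    _ ≤ Real.sqrt (n * κ₂ ^ 2) := Real.sqrt_le_sqrt h1
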